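/- arXiv:2501.01111 — 2 statements merged into one kernel-verified Lean document; each statement's English description precedes it below -/
import Mathlib

section
/- Let N, M be positive integers and define φ : ℝ^{NM} → ℝ^{NM} as the blockwise softmax layer: for s ∈ ℝ^{NM} (indexed by agent–resource pairs (i,m)) and each resource m, the m-th block of φ(s) is softmax(s_{1,m}, …, s_{N,m}), where softmax : ℝ^N → [0,1]^N is defined by softmax_i(u) = e^{u_i} / Σ_{k=1}^N e^{u_k}. Then φ is 1-Lipschitz from ℓ1 to ℓ1: for all s, s′ ∈ ℝ^{NM}, ‖φ(s) − φ(s′)‖₁ ≤ ‖s − s′‖₁. -/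
open Finset

noncomputable def sm {N : ℕ} (u : Fin N → ℝ) (i : Fin N) : ℝ :=
  Real.exp (u i) / ∑ k, Real.exp (u k)

lemma key_scalar (t : ℝ) (ht : 0 ≤ t) : 2 * (Real.exp t - 1) ≤ t * (Real.exp t + 1) := by
  have h : Monotone (fun t : ℝ => t * (Real.exp t + 1) - 2 * (Real.exp t - 1)) := by
    apply monotone_of_deriv_nonneg
    · fun_prop
    · intro x
      have hd : HasDerivAt (fun t : ℝ => t * (Real.exp t + 1) - 2 * (Real.exp t - 1))
          ((Real.exp x + 1) + x * Real.exp x - 2 * Real.exp x) x := by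
        have := ((hasDerivAt_id x).mul ((Real.hasDerivAt_exp x).add_const 1)).sub
          (((Real.hasDerivAt_exp x).sub_const 1).const_mul 2)
        exact this.congr_deriv (by simp only [id_eq]; ring)
      rw [hd.deriv]
      have h1 : 1 - x ≤ Real.exp (-x) := by linarith [Real.add_one_le_exp (-x)]
      have h2 : Real.exp (-x) * Real.exp x = 1 := by
        rw [← Real.exp_add]; simp
      nlinarith [Real.exp_pos x]
  have := h ht
  simp at this
  linarith

lemma helper (S x y : ℝ) (hS : 0 ≤ S) :
    2 * S * |Real.exp x - Real.exp y| ≤ |x - y| * ((S + Real.exp x) * (S + Real.exp y)) := by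
  wlog hxy : y ≤ x generalizing x y
  · have h := this y x (le_of_not_ge hxy)
    rw [abs_sub_comm, abs_sub_comm y x] at h
    linarith [h]
  set t := x - y with htdef
  have ht : 0 ≤ t := by simp only [htdef]; linarith
  have hx : Real.exp x = Real.exp y * Real.exp t := by
    rw [← Real.exp_add, htdef]; ring_nf
  have hey := Real.exp_pos y
  have het := Real.exp_pos t
  have het1 : 1 ≤ Real.exp t := Real.one_le_exp ht
  rw [abs_of_nonneg (by nlinarith : (0:ℝ) ≤ Real.exp x - Real.exp y),
      abs_of_nonneg (by linarith : (0:ℝ) ≤ x - y)]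
  have key := key_scalar t ht
  rw [hx, ← htdef]
  nlinarith [mul_le_mul_of_nonneg_left key (mul_nonneg hS hey.le),
    mul_nonneg ht (mul_nonneg hS hS),
    mul_nonneg ht (mul_nonneg (mul_nonneg hey.le hey.le) het.le)]

lemma sm_update {N : ℕ} (u : Fin N → ℝ) (k : Fin N) (c : ℝ) :
    ∑ i, |sm (Function.update u k c) i - sm u i| ≤ |c - u k| := by
  classical
  set v := Function.update u k c with hv
  set S := ∑ j ∈ Finset.univ.erase k, Real.exp (u j) with hS
  have hSnn : 0 ≤ S := Finset.sum_nonneg fun _ _ => (Real.exp_pos _).le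
  have hvk : v k = c := Function.update_self k c u
  have hvne : ∀ j, j ≠ k → v j = u j := fun j hj => Function.update_of_ne hj c u
  set a := Real.exp (u k) with ha
  set b := Real.exp c with hb
  have hA : ∑ j, Real.exp (u j) = S + a := (Finset.sum_erase_add _ _ (Finset.mem_univ k)).symm
  have hB : ∑ j, Real.exp (v j) = S + b := by
    rw [← Finset.sum_erase_add _ _ (Finset.mem_univ k), hvk]
    congr 1
    exact Finset.sum_congr rfl fun j hj => by rw [hvne j (Finset.ne_of_mem_erase hj)]
  have hpa : 0 < S + a := add_pos_of_nonneg_of_pos hSnn (ha ▸ Real.exp_pos _)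
  have hpb : 0 < S + b := add_pos_of_nonneg_of_pos hSnn (hb ▸ Real.exp_pos _)
  have hsmv : ∀ i, sm v i = Real.exp (v i) / (S + b) := fun i => by rw [sm, hB]
  have hsmu : ∀ i, sm u i = Real.exp (u i) / (S + a) := fun i => by rw [sm, hA]
  rw [← Finset.sum_erase_add _ _ (Finset.mem_univ k)]
  have step : ∀ i ∈ Finset.univ.erase k,
      |sm v i - sm u i| = Real.exp (u i) * (|a - b| / ((S + a) * (S + b))) := by
    intro i hi
    rw [hsmv, hsmu, hvne i (Finset.ne_of_mem_erase hi)]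
    have h1 : Real.exp (u i) / (S + b) - Real.exp (u i) / (S + a)
        = Real.exp (u i) * ((a - b) / ((S + a) * (S + b))) := by
      field_simp; ring
    rw [h1, abs_mul, abs_of_pos (Real.exp_pos _), abs_div,
        abs_of_pos (mul_pos hpa hpb)]
  rw [Finset.sum_congr rfl step, ← Finset.sum_mul, ← hS]
  have hk : |sm v k - sm u k| = S * (|a - b| / ((S + a) * (S + b))) := by
    have h2 : sm v k - sm u k = S * ((b - a) / ((S + a) * (S + b))) := by
      rw [hsmv, hsmu, hvk]; field_simp; ring
    rw [h2, abs_mul, abs_of_nonneg hSnn, abs_div, abs_of_pos (mul_pos hpa hpb),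
        abs_sub_comm]
  rw [hk]
  have hsum : S * (|a - b| / ((S + a) * (S + b))) + S * (|a - b| / ((S + a) * (S + b)))
      = (2 * S * |a - b|) / ((S + a) * (S + b)) := by ring
  rw [hsum, div_le_iff₀ (mul_pos hpa hpb)]
  have hkey := helper S (u k) c hSnn
  rw [← ha, ← hb] at hkey
  calc 2 * S * |a - b| ≤ |u k - c| * ((S + a) * (S + b)) := hkey
    _ = |c - u k| * ((S + a) * (S + b)) := by rw [abs_sub_comm]

lemma sm_lip_aux {N : ℕ} (T : Finset (Fin N)) :
    ∀ u v : Fin N → ℝ, (∀ i, i ∉ T → u i = v i) →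
      ∑ i, |sm u i - sm v i| ≤ ∑ i ∈ T, |u i - v i| := by
  classical
  induction T using Finset.induction with
  | empty =>
    intro u v h
    have huv : u = v := funext fun i => h i (by simp)
    simp [huv]
  | @insert k T' hk ih =>
    intro u v h
    set w := Function.update u k (v k) with hw
    have h1 : ∑ i, |sm w i - sm u i| ≤ |v k - u k| := sm_update u k (v k)
    have h2 : ∑ i, |sm w i - sm v i| ≤ ∑ i ∈ T', |w i - v i| := by
      apply ih
      intro i hi
      by_cases hik : i = k
      · subst hik; simp [hw]
      · rw [hw, Function.update_of_ne hik]
        exact h i (by simp [hik, hi])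
    have h3 : ∑ i ∈ T', |w i - v i| = ∑ i ∈ T', |u i - v i| :=
      Finset.sum_congr rfl fun i hi => by
        rw [hw, Function.update_of_ne (by rintro rfl; exact hk hi)]
    calc ∑ i, |sm u i - sm v i|
        ≤ ∑ i, (|sm u i - sm w i| + |sm w i - sm v i|) :=
          Finset.sum_le_sum fun i _ => abs_sub_le _ _ _
      _ = ∑ i, |sm w i - sm u i| + ∑ i, |sm w i - sm v i| := by
          rw [Finset.sum_add_distrib]
          congr 1
          exact Finset.sum_congr rfl fun i _ => abs_sub_comm _ _
      _ ≤ |v k - u k| + ∑ i ∈ T', |u i - v i| := by rw [← h3]; exact add_le_add h1 h2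
      _ = ∑ i ∈ insert k T', |u i - v i| := by
          rw [Finset.sum_insert hk, abs_sub_comm]

lemma sm_lipschitz {N : ℕ} (u v : Fin N → ℝ) :
    ∑ i, |sm u i - sm v i| ≤ ∑ i, |u i - v i| :=
  sm_lip_aux Finset.univ u v (fun i hi => absurd (Finset.mem_univ i) hi)

/-- The blockwise softmax layer: for each resource `m`, the `m`-th block of `φ(s)` is
`softmax(s_{1,m}, …, s_{N,m})`, with `softmax_i(u) = e^{u_i} / Σ_k e^{u_k}`. -/
noncomputable def blockSoftmax {N M : ℕ} (s : Fin N → Fin M → ℝ) (i : Fin N) (m : Fin M) : ℝ :=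
  Real.exp (s i m) / ∑ k, Real.exp (s k m)

/-- the blockwise softmax layer is 1-Lipschitz from ℓ1 to ℓ1:
`‖φ(s) − φ(s')‖₁ ≤ ‖s − s'‖₁` for all `s, s' ∈ ℝ^{NM}`. -/
theorem stmt_9 (N M : ℕ) (hN : 0 < N) (hM : 0 < M) (s s' : Fin N → Fin M → ℝ) :
    ∑ i, ∑ m, |blockSoftmax s i m - blockSoftmax s' i m| ≤ ∑ i, ∑ m, |s i m - s' i m| := by
  have e1 : ∑ i : Fin N, ∑ m : Fin M, |blockSoftmax s i m - blockSoftmax s' i m|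
      = ∑ m : Fin M, ∑ i : Fin N, |blockSoftmax s i m - blockSoftmax s' i m| :=
    Finset.sum_comm
  have e2 : ∑ i : Fin N, ∑ m : Fin M, |s i m - s' i m|
      = ∑ m : Fin M, ∑ i : Fin N, |s i m - s' i m| := Finset.sum_comm
  rw [e1, e2]
  apply Finset.sum_le_sum
  intro m _
  have : ∀ i, blockSoftmax s i m = sm (fun k => s k m) i := fun i => rfl
  have h' : ∀ i, blockSoftmax s' i m = sm (fun k => s' k m) i := fun i => rfl
  simp only [this, h']
  exact sm_lipschitz (fun k => s k m) (fun k => s' k m)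
end

section
/- Assume the boundedness assumption holds for the mechanism class M on profile space Y with constant ψ > 1. Let U = { y ↦ (u_1^ω(y), …, u_N^ω(y)) : f^ω ∈ M } with the ℓ_{∞,1} distance, and let exp̄∘U = { y ↦ Σ_{i=1}^N ( sup_{y_i'} u_i^ω(y_i') − u_i^ω(y) ) : f^ω ∈ M }, where for y = (v,x,b) the i-th supremum is over all unilateral misreports y_i' = ((v_i', v_{−i}), (x_i', x_{−i}), b) ∈ Y of agent i, with the sup-absolute-difference distance. Then for every ε > 0: N∞(exp̄∘U, ε) ≤ N∞(U, ε/(2N)). -/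
open Finset

/-- The utility of agent `i`: `u_i(a,v,x) = Σ_m v_{i,m} · min(a_{i,m}, x_{i,m})`. -/
def util {N M : ℕ} (a v x : Fin N → Fin M → ℝ) (i : Fin N) : ℝ :=
  ∑ m, v i m * min (a i m) (x i m)

/-- Feasibility: `a ∈ A_{b,x}`. -/
def feasible {N M : ℕ} (b : Fin M → ℝ) (x a : Fin N → Fin M → ℝ) : Prop :=
  (∀ i m, 0 ≤ a i m ∧ a i m ≤ x i m) ∧ ∀ m, ∑ i, a i m ≤ b m

/-- A profile `y = (v, x, b)`. -/
abbrev Profile (N M : ℕ) :=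
  (Fin N → Fin M → ℝ) × (Fin N → Fin M → ℝ) × (Fin M → ℝ)

/-- Utility of agent `i` under mechanism `f` at profile `y`: `u_i^ω(y)`. -/
def mutil {N M : ℕ} (f : Profile N M → (Fin N → Fin M → ℝ)) (i : Fin N)
    (y : Profile N M) : ℝ :=
  util (f y) y.1 y.2.1 i

/-- The set of unilateral misreports of agent `i` at profile `y` within `Y`. -/
def misreports {N M : ℕ} (Y : Set (Profile N M)) (i : Fin N) (y : Profile N M) :
    Set (Profile N M) :=
  {y' ∈ Y | y'.2.2 = y.2.2 ∧ ∀ j, j ≠ i → y'.1 j = y.1 j ∧ y'.2.1 j = y.2.1 j}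

/-- Generic covering number: the minimal cardinality (in `ℕ∞`) of a subset `G ⊆ F`
such that every `f ∈ F` is `close` to some `g ∈ G`. -/
noncomputable def covN {α : Type*} (F : Set α) (close : α → α → Prop) : ℕ∞ :=
  sInf ((fun G : Finset α => (G.card : ℕ∞)) ''
    {G : Finset α | ↑G ⊆ F ∧ ∀ f ∈ F, ∃ g ∈ G, close f g})

/-- `ℓ_{∞,1}`-closeness at scale `ε` for `ℝ^{NM}`-valued mechanisms, over `Y`. -/
def closeM {N M : ℕ} (Y : Set (Profile N M)) (ε : ℝ)
    (f g : Profile N M → (Fin N → Fin M → ℝ)) : Prop :=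
  ∀ y ∈ Y, ∑ i, ∑ m, |f y i m - g y i m| ≤ ε

/-- sup-absolute-difference closeness at scale `ε` for scalar functions, over `Y`. -/
def closeS {N M : ℕ} (Y : Set (Profile N M)) (ε : ℝ)
    (g g' : Profile N M → ℝ) : Prop :=
  ∀ y ∈ Y, |g y - g' y| ≤ ε

/-- `ℓ_{∞,1}`-closeness at scale `ε` for `ℝ^N`-valued functions, over `Y`. -/
def closeV {N M : ℕ} (Y : Set (Profile N M)) (ε : ℝ)
    (g g' : Profile N M → (Fin N → ℝ)) : Prop :=
  ∀ y ∈ Y, ∑ i, |g y i - g' y i| ≤ ε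

/-- The boundedness assumption for a mechanism class `Mcl` on a profile space `Y`
with constant `ψ`: feasibility, `1/ψ ≤ u_i^ω(y) ≤ ψ`, and `Σ_m v_{i,m} ≤ 1`. -/
def BoundedClass {N M : ℕ} (Y : Set (Profile N M))
    (Mcl : Set (Profile N M → (Fin N → Fin M → ℝ))) (ψ : ℝ) : Prop :=
  (∀ f ∈ Mcl, ∀ y ∈ Y, feasible y.2.2 y.2.1 (f y)) ∧
  (∀ f ∈ Mcl, ∀ y ∈ Y, ∀ i, 1/ψ ≤ mutil f i y ∧ mutil f i y ≤ ψ) ∧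
  (∀ y ∈ Y, ∀ i : Fin N, ∑ m, y.1 i m ≤ 1)

lemma abs_sSup_sub_sSup_le {A B : Set ℝ} (hA : A.Nonempty) (hB : B.Nonempty)
    (hbA : BddAbove A) (hbB : BddAbove B) {δ : ℝ}
    (h1 : ∀ a ∈ A, ∃ b ∈ B, a ≤ b + δ) (h2 : ∀ b ∈ B, ∃ a ∈ A, b ≤ a + δ) :
    |sSup A - sSup B| ≤ δ := by
  rw [abs_sub_le_iff]
  constructor
  · have : sSup A ≤ sSup B + δ := csSup_le hA fun a ha => by
      obtain ⟨b, hb, hab⟩ := h1 a ha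
      have := le_csSup hbB hb
      linarith
    linarith
  · have : sSup B ≤ sSup A + δ := csSup_le hB fun b hb => by
      obtain ⟨a, ha, hab⟩ := h2 b hb
      have := le_csSup hbA ha
      linarith
    linarith

/-- under the boundedness assumption with constant `ψ > 1`,
`N∞(exp̄∘U, ε) ≤ N∞(U, ε/(2N))`, where `U = {y ↦ (u_1^ω(y),…,u_N^ω(y))}` and
`exp̄∘U = {y ↦ Σ_i (sup_{y_i'} u_i^ω(y_i') − u_i^ω(y))}`. -/
theorem stmt_12 (N M : ℕ) (hN : 0 < N) (hM : 0 < M)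
    (Y : Set (Profile N M)) (Mcl : Set (Profile N M → (Fin N → Fin M → ℝ)))
    (ψ : ℝ) (hψ : 1 < ψ) (hbd : BoundedClass Y Mcl ψ)
    (ε : ℝ) (hε : 0 < ε) :
    covN
      ((fun f => fun y => ∑ i,
          (sSup ((fun y' => mutil f i y') '' misreports Y i y) - mutil f i y)) '' Mcl)
      (closeS Y ε) ≤
    covN ((fun f => fun y => fun i => mutil f i y) '' Mcl) (closeV Y (ε / (2 * N))) := by
  classical
  set δ : ℝ := ε / (2 * N) with hδdef
  have hNr : (1:ℝ) ≤ (N:ℝ) := by exact_mod_cast hN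
  have hNpos : (0:ℝ) < (N:ℝ) := by linarith
  have hδpos : 0 < δ := by
    apply div_pos hε; positivity
  set uvec : (Profile N M → (Fin N → Fin M → ℝ)) → (Profile N M → Fin N → ℝ) :=
    fun f => fun y => fun i => mutil f i y with huvec
  set E : (Profile N M → (Fin N → Fin M → ℝ)) → (Profile N M → ℝ) :=
    fun f => fun y => ∑ i,
      (sSup ((fun y' => mutil f i y') '' misreports Y i y) - mutil f i y) with hE
  -- main analytic lemma
  have hmain : ∀ f ∈ Mcl, ∀ f' ∈ Mcl, closeV Y δ (uvec f) (uvec f') →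
      closeS Y ε (E f) (E f') := by
    intro f hf f' hf' hclose y hy
    have hterm : ∀ i : Fin N,
        |(sSup ((fun y' => mutil f i y') '' misreports Y i y) - mutil f i y) -
          (sSup ((fun y' => mutil f' i y') '' misreports Y i y) - mutil f' i y)| ≤
        δ + |mutil f i y - mutil f' i y| := by
      intro i
      have hself : y ∈ misreports Y i y := by
        refine ⟨hy, rfl, fun j _ => ⟨rfl, rfl⟩⟩
      have hsub : misreports Y i y ⊆ Y := fun y' hy' => hy'.1
      have hpt : ∀ y' ∈ misreports Y i y, |mutil f i y' - mutil f' i y'| ≤ δ := by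
        intro y' hy'
        have h1 := hclose y' (hsub hy')
        calc |mutil f i y' - mutil f' i y'| = |uvec f y' i - uvec f' y' i| := rfl
          _ ≤ ∑ j, |uvec f y' j - uvec f' y' j| :=
              Finset.single_le_sum (f := fun j => |uvec f y' j - uvec f' y' j|)
                (fun j _ => abs_nonneg _) (Finset.mem_univ i)
          _ ≤ δ := h1
      have hAne : ((fun y' => mutil f i y') '' misreports Y i y).Nonempty :=
        ⟨_, Set.mem_image_of_mem _ hself⟩
      have hBne : ((fun y' => mutil f' i y') '' misreports Y i y).Nonempty :=
        ⟨_, Set.mem_image_of_mem _ hself⟩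
      have hbA : BddAbove ((fun y' => mutil f i y') '' misreports Y i y) := by
        refine ⟨ψ, ?_⟩
        rintro _ ⟨y', hy', rfl⟩
        exact (hbd.2.1 f hf y' (hsub hy') i).2
      have hbB : BddAbove ((fun y' => mutil f' i y') '' misreports Y i y) := by
        refine ⟨ψ, ?_⟩
        rintro _ ⟨y', hy', rfl⟩
        exact (hbd.2.1 f' hf' y' (hsub hy') i).2
      have hsup : |sSup ((fun y' => mutil f i y') '' misreports Y i y) -
          sSup ((fun y' => mutil f' i y') '' misreports Y i y)| ≤ δ := by
        apply abs_sSup_sub_sSup_le hAne hBne hbA hbB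
        · rintro _ ⟨y', hy', rfl⟩
          refine ⟨mutil f' i y', Set.mem_image_of_mem _ hy', ?_⟩
          have := hpt y' hy'
          have := abs_le.mp this
          linarith [this.2]
        · rintro _ ⟨y', hy', rfl⟩
          refine ⟨mutil f i y', Set.mem_image_of_mem _ hy', ?_⟩
          have := hpt y' hy'
          have := abs_le.mp this
          linarith [this.1]
      calc |(sSup ((fun y' => mutil f i y') '' misreports Y i y) - mutil f i y) -
          (sSup ((fun y' => mutil f' i y') '' misreports Y i y) - mutil f' i y)|
          = |(sSup ((fun y' => mutil f i y') '' misreports Y i y) -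
              sSup ((fun y' => mutil f' i y') '' misreports Y i y)) +
              (mutil f' i y - mutil f i y)| := by ring_nf
        _ ≤ |sSup ((fun y' => mutil f i y') '' misreports Y i y) -
              sSup ((fun y' => mutil f' i y') '' misreports Y i y)| +
              |mutil f' i y - mutil f i y| := abs_add_le _ _
        _ ≤ δ + |mutil f i y - mutil f' i y| := by
            rw [abs_sub_comm (mutil f' i y)]; linarith
    calc |E f y - E f' y|
        = |∑ i, ((sSup ((fun y' => mutil f i y') '' misreports Y i y) - mutil f i y) -
            (sSup ((fun y' => mutil f' i y') '' misreports Y i y) - mutil f' i y))| := by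
          simp only [hE, Finset.sum_sub_distrib]
      _ ≤ ∑ i, |(sSup ((fun y' => mutil f i y') '' misreports Y i y) - mutil f i y) -
            (sSup ((fun y' => mutil f' i y') '' misreports Y i y) - mutil f' i y)| :=
          Finset.abs_sum_le_sum_abs _ _
      _ ≤ ∑ i : Fin N, (δ + |mutil f i y - mutil f' i y|) :=
          Finset.sum_le_sum (fun i _ => hterm i)
      _ = N * δ + ∑ i, |mutil f i y - mutil f' i y| := by
          rw [Finset.sum_add_distrib]; simp [mul_comm]
      _ ≤ N * δ + δ := by
          have := hclose y hy
          simpa using add_le_add_left this (N * δ)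
      _ ≤ ε := by
          have h1 : (N:ℝ) * δ = ε / 2 := by
            rw [hδdef, mul_div_assoc', div_eq_div_iff (by positivity) (by norm_num)]; ring
          have h2 : δ ≤ ε / 2 := by
            rw [hδdef, div_le_div_iff₀ (by positivity) (by norm_num)]
            nlinarith
          linarith
  -- covering number manipulation
  apply le_sInf
  rintro b ⟨G, ⟨hGsub, hGcov⟩, rfl⟩
  set pick : (Profile N M → Fin N → ℝ) → (Profile N M → (Fin N → Fin M → ℝ)) :=
    fun g => if h : ∃ f, f ∈ Mcl ∧ uvec f = g then h.choose else fun _ _ _ => 0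
    with hpick
  have hpick_spec : ∀ g ∈ uvec '' Mcl, pick g ∈ Mcl ∧ uvec (pick g) = g := by
    intro g hg
    obtain ⟨f, hf, hfg⟩ := hg
    have h : ∃ f, f ∈ Mcl ∧ uvec f = g := ⟨f, hf, hfg⟩
    rw [hpick]
    simp only [dif_pos h]
    exact h.choose_spec
  have hmem : (((G.image (fun g => E (pick g))).card : ℕ∞)) ∈
      ((fun G : Finset (Profile N M → ℝ) => (G.card : ℕ∞)) ''
        {G : Finset (Profile N M → ℝ) | ↑G ⊆ E '' Mcl ∧
          ∀ f ∈ E '' Mcl, ∃ g ∈ G, closeS Y ε f g}) := by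
    refine ⟨G.image (fun g => E (pick g)), ⟨?_, ?_⟩, rfl⟩
    · intro h hh
      simp only [Finset.coe_image, Set.mem_image, Finset.mem_coe] at hh
      obtain ⟨g, hg, rfl⟩ := hh
      exact Set.mem_image_of_mem E (hpick_spec g (hGsub hg)).1
    · rintro h ⟨f, hf, rfl⟩
      obtain ⟨g, hg, hclose⟩ := hGcov (uvec f) (Set.mem_image_of_mem _ hf)
      obtain ⟨hpm, hpe⟩ := hpick_spec g (hGsub hg)
      refine ⟨E (pick g), Finset.mem_image_of_mem _ hg, ?_⟩
      apply hmain f hf (pick g) hpm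
      rw [hpe]; exact hclose
  refine le_trans (sInf_le hmem) ?_
  show ((G.image (fun g => E (pick g))).card : ℕ∞) ≤ (G.card : ℕ∞)
  exact_mod_cast Finset.card_image_le
end
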